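/- Let $\omega$ be a positive Borel measure on $(a,b)$, $M: (a,b) \to \mathbb{C}^{n\times n}$ with $\|M(\cdot)\| \in L^1_{loc}((a,b);\omega)$, and suppose $I + \omega(\{x\}) M(x)$ is invertible for all $x \in (a,b)$. Then for each $c \in (a,b)$ and $Y_c \in \mathbb{C}^n$, the homogeneous integral equation $Y(x) = Y_c + \int_c^x M(t) Y(t)\, d\omega(t)$ has at most one solution on $(a,b)$. -/

import Mathlib

open MeasureTheory Set

/-- The two-sided integral `∫_c^x h dω` (over `[c,x)` resp. `-∫ [x,c)`). -/
noncomputable def vInt {n : ℕ} (ω : Measure ℝ) (h : ℝ → Fin n → ℂ) (c x : ℝ) :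
    Fin n → ℂ :=
  if c ≤ x then ∫ t in Set.Ico c x, h t ∂ω else -∫ t in Set.Ico x c, h t ∂ω


open Filter Topology


lemma mulVec_norm_le' {n : ℕ} (A : Matrix (Fin n) (Fin n) ℂ) (v : Fin n → ℂ) :
    ‖A.mulVec v‖ ≤ (∑ i, ∑ j, ‖A i j‖) * ‖v‖ := by
  have hnn : (0:ℝ) ≤ (∑ i, ∑ j, ‖A i j‖) * ‖v‖ :=
    mul_nonneg (Finset.sum_nonneg fun i _ => Finset.sum_nonneg fun j _ => norm_nonneg _)
      (norm_nonneg v)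
  rw [pi_norm_le_iff_of_nonneg hnn]
  intro i
  calc ‖A.mulVec v i‖ = ‖∑ j, A i j * v j‖ := by
        simp [Matrix.mulVec, dotProduct]
    _ ≤ ∑ j, ‖A i j * v j‖ := norm_sum_le _ _
    _ = ∑ j, ‖A i j‖ * ‖v j‖ := by simp [norm_mul]
    _ ≤ ∑ j, ‖A i j‖ * ‖v‖ := Finset.sum_le_sum fun j _ =>
        mul_le_mul_of_nonneg_left (norm_le_pi_norm v j) (norm_nonneg _)
    _ = (∑ j, ‖A i j‖) * ‖v‖ := (Finset.sum_mul _ _ _).symm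
    _ ≤ (∑ i, ∑ j, ‖A i j‖) * ‖v‖ := by
        apply mul_le_mul_of_nonneg_right _ (norm_nonneg v)
        exact Finset.single_le_sum (f := fun i => ∑ j, ‖A i j‖)
          (fun i _ => Finset.sum_nonneg fun j _ => norm_nonneg _) (Finset.mem_univ i)

lemma eq_zero_of_isUnit_mulVec {n : ℕ} {A : Matrix (Fin n) (Fin n) ℂ} (hA : IsUnit A)
    {v : Fin n → ℂ} (h : A.mulVec v = 0) : v = 0 := by
  have h2 := congrArg (fun w => Matrix.mulVec (↑hA.unit⁻¹ : Matrix (Fin n) (Fin n) ℂ) w) h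
  simp only [Matrix.mulVec_mulVec] at h2
  have h3 : (↑hA.unit⁻¹ : Matrix (Fin n) (Fin n) ℂ) * A = 1 := by
    exact hA.val_inv_mul
  rw [h3, Matrix.one_mulVec] at h2
  simpa using h2

lemma exists_small_right (ω : Measure ℝ) (g : ℝ → ℝ) (s x₀ : ℝ) (h : s < x₀)
    (hgi : IntegrableOn g (Set.Ico s x₀) ω) (hg0 : ∀ t, 0 ≤ g t) :
    ∃ s', s < s' ∧ s' ≤ x₀ ∧ ∫ t in Set.Ioo s s', g t ∂ω < 1/4 := by
  set δ := x₀ - s with hδdef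
  have hδ : 0 < δ := by simp [hδdef]; linarith
  set u : ℕ → ℝ := fun k => s + δ / (k + 1) with hudef
  have hu1 : ∀ k : ℕ, s < u k := by
    intro k
    have : (0:ℝ) < δ / (k+1) := div_pos hδ (by positivity)
    simp only [hudef]; linarith
  have hu2 : ∀ k : ℕ, u k ≤ x₀ := by
    intro k
    have h1 : δ / (k+1) ≤ δ := by
      apply div_le_self (le_of_lt hδ)
      have : (0:ℝ) ≤ (k:ℝ) := Nat.cast_nonneg k
      linarith
    simp only [hudef, hδdef]; linarith
  have hsub : ∀ k : ℕ, Set.Ioo s (u k) ⊆ Set.Ico s x₀ := fun k t ht =>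
    ⟨le_of_lt ht.1, lt_of_lt_of_le ht.2 (hu2 k)⟩
  have key : Tendsto (fun k : ℕ => ∫ t in Set.Ioo s (u k), g t ∂ω) atTop (𝓝 0) := by
    have heq : ∀ k : ℕ, ∫ t in Set.Ioo s (u k), g t ∂ω
        = ∫ t, (Set.Ioo s (u k)).indicator g t ∂(ω.restrict (Set.Ico s x₀)) := by
      intro k
      rw [integral_indicator measurableSet_Ioo, Measure.restrict_restrict measurableSet_Ioo,
        Set.inter_eq_self_of_subset_left (hsub k)]
    have key2 : Tendsto (fun k : ℕ => ∫ t, (Set.Ioo s (u k)).indicator g t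
        ∂(ω.restrict (Set.Ico s x₀))) atTop (𝓝 0) := by
      have h0 : (0:ℝ) = ∫ t, (0:ℝ) ∂(ω.restrict (Set.Ico s x₀)) := by simp
      rw [h0]
      apply tendsto_integral_of_dominated_convergence g
        (fun k => hgi.aestronglyMeasurable.indicator measurableSet_Ioo) hgi
      · intro k
        filter_upwards with t
        by_cases ht : t ∈ Set.Ioo s (u k)
        · rw [Set.indicator_of_mem ht, Real.norm_eq_abs, abs_of_nonneg (hg0 t)]
        · rw [Set.indicator_of_notMem ht]; simpa using hg0 t
      · filter_upwards with t
        by_cases hts : s < t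
        · have hev : ∀ᶠ k : ℕ in atTop, (Set.Ioo s (u k)).indicator g t = 0 := by
            obtain ⟨K, hK⟩ := exists_nat_gt (δ / (t - s))
            filter_upwards [eventually_ge_atTop K] with k hk
            apply Set.indicator_of_notMem
            intro hmem
            have h2 : t < u k := hmem.2
            have h3 : δ / (t - s) < (k:ℝ) + 1 := by
              have : (K:ℝ) ≤ (k:ℝ) := Nat.cast_le.mpr hk
              linarith
            have hts' : (0:ℝ) < t - s := sub_pos.mpr hts
            have h3' : δ < ((k:ℝ)+1) * (t - s) := by
              rw [div_lt_iff₀ hts'] at h3; linarith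
            have h4 : δ / ((k:ℝ)+1) < t - s := by
              rw [div_lt_iff₀ (by positivity : (0:ℝ) < (k:ℝ)+1)]
              nlinarith
            simp only [hudef] at h2; linarith
          have hev' : (fun k : ℕ => (Set.Ioo s (u k)).indicator g t) =ᶠ[atTop]
              (fun _ => (0:ℝ)) := hev
          exact Tendsto.congr' hev'.symm tendsto_const_nhds
        · have : ∀ k : ℕ, (Set.Ioo s (u k)).indicator g t = 0 := fun k =>
            Set.indicator_of_notMem (fun hmem => hts hmem.1) g
          simpa [this] using tendsto_const_nhds (x := (0:ℝ)) (f := atTop (α := ℕ))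
    exact key2.congr fun k => (heq k).symm
  have hev := key.eventually_lt_const (by norm_num : (0:ℝ) < 1/4)
  obtain ⟨k, hk⟩ := hev.exists
  exact ⟨u k, hu1 k, hu2 k, hk⟩

lemma exists_small_left (ω : Measure ℝ) (g : ℝ → ℝ) (x₀ s : ℝ) (h : x₀ < s)
    (hgi : IntegrableOn g (Set.Ico x₀ s) ω) (hg0 : ∀ t, 0 ≤ g t) :
    ∃ s', x₀ ≤ s' ∧ s' < s ∧ ∫ t in Set.Ioo s' s, g t ∂ω < 1/4 := by
  set δ := s - x₀ with hδdef
  have hδ : 0 < δ := by simp [hδdef]; linarith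
  set u : ℕ → ℝ := fun k => s - δ / (k + 1) with hudef
  have hu1 : ∀ k : ℕ, u k < s := by
    intro k
    have : (0:ℝ) < δ / (k+1) := div_pos hδ (by positivity)
    simp only [hudef]; linarith
  have hu2 : ∀ k : ℕ, x₀ ≤ u k := by
    intro k
    have h1 : δ / (k+1) ≤ δ := by
      apply div_le_self (le_of_lt hδ)
      have : (0:ℝ) ≤ (k:ℝ) := Nat.cast_nonneg k
      linarith
    simp only [hudef, hδdef]; linarith
  have hsub : ∀ k : ℕ, Set.Ioo (u k) s ⊆ Set.Ico x₀ s := fun k t ht =>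
    ⟨le_of_lt (lt_of_le_of_lt (hu2 k) ht.1), ht.2⟩
  have key : Tendsto (fun k : ℕ => ∫ t in Set.Ioo (u k) s, g t ∂ω) atTop (𝓝 0) := by
    have heq : ∀ k : ℕ, ∫ t in Set.Ioo (u k) s, g t ∂ω
        = ∫ t, (Set.Ioo (u k) s).indicator g t ∂(ω.restrict (Set.Ico x₀ s)) := by
      intro k
      rw [integral_indicator measurableSet_Ioo, Measure.restrict_restrict measurableSet_Ioo,
        Set.inter_eq_self_of_subset_left (hsub k)]
    have key2 : Tendsto (fun k : ℕ => ∫ t, (Set.Ioo (u k) s).indicator g t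
        ∂(ω.restrict (Set.Ico x₀ s))) atTop (𝓝 0) := by
      have h0 : (0:ℝ) = ∫ t, (0:ℝ) ∂(ω.restrict (Set.Ico x₀ s)) := by simp
      rw [h0]
      apply tendsto_integral_of_dominated_convergence g
        (fun k => hgi.aestronglyMeasurable.indicator measurableSet_Ioo) hgi
      · intro k
        filter_upwards with t
        by_cases ht : t ∈ Set.Ioo (u k) s
        · rw [Set.indicator_of_mem ht, Real.norm_eq_abs, abs_of_nonneg (hg0 t)]
        · rw [Set.indicator_of_notMem ht]; simpa using hg0 t
      · filter_upwards with t
        by_cases hts : t < s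
        · have hev : ∀ᶠ k : ℕ in atTop, (Set.Ioo (u k) s).indicator g t = 0 := by
            obtain ⟨K, hK⟩ := exists_nat_gt (δ / (s - t))
            filter_upwards [eventually_ge_atTop K] with k hk
            apply Set.indicator_of_notMem
            intro hmem
            have h2 : u k < t := hmem.1
            have h3 : δ / (s - t) < (k:ℝ) + 1 := by
              have : (K:ℝ) ≤ (k:ℝ) := Nat.cast_le.mpr hk
              linarith
            have hts' : (0:ℝ) < s - t := sub_pos.mpr hts
            have h3' : δ < ((k:ℝ)+1) * (s - t) := by
              rw [div_lt_iff₀ hts'] at h3; linarith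
            have h4 : δ / ((k:ℝ)+1) < s - t := by
              rw [div_lt_iff₀ (by positivity : (0:ℝ) < (k:ℝ)+1)]
              nlinarith
            simp only [hudef] at h2; linarith
          have hev' : (fun k : ℕ => (Set.Ioo (u k) s).indicator g t) =ᶠ[atTop]
              (fun _ => (0:ℝ)) := hev
          exact Tendsto.congr' hev'.symm tendsto_const_nhds
        · have : ∀ k : ℕ, (Set.Ioo (u k) s).indicator g t = 0 := fun k =>
            Set.indicator_of_notMem (fun hmem => hts hmem.2) g
          simpa [this] using tendsto_const_nhds (x := (0:ℝ)) (f := atTop (α := ℕ))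
    exact key2.congr fun k => (heq k).symm
  have hev := key.eventually_lt_const (by norm_num : (0:ℝ) < 1/4)
  obtain ⟨k, hk⟩ := hev.exists
  exact ⟨u k, hu2 k, hu1 k, hk⟩

lemma iter_zero {n : ℕ} (ω : Measure ℝ) (g : ℝ → ℝ) (F Z : ℝ → Fin n → ℂ) (p q K : ℝ)
    (hK : 0 ≤ K)
    (hgi : IntegrableOn g (Set.Ioo p q) ω) (hg0 : ∀ t, 0 ≤ g t)
    (hFi : IntegrableOn F (Set.Ioo p q) ω)
    (hFg : ∀ t ∈ Set.Ioo p q, ‖F t‖ ≤ g t * ‖Z t‖)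
    (S : ℝ → Set ℝ) (hSm : ∀ t, MeasurableSet (S t))
    (hSsub : ∀ t ∈ Set.Ioo p q, S t ⊆ Set.Ioo p q)
    (hZle : ∀ t ∈ Set.Ioo p q, ‖Z t‖ ≤ K * ∫ τ in S t, ‖F τ‖ ∂ω)
    (hsmall : K * ∫ t in Set.Ioo p q, g t ∂ω ≤ 1/2) :
    ∀ t ∈ Set.Ioo p q, Z t = 0 := by
  set C := K * ∫ τ in Set.Ioo p q, ‖F τ‖ ∂ω with hCdef
  have hC0 : 0 ≤ C := mul_nonneg hK (integral_nonneg fun τ => norm_nonneg _)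
  have hnn : ∀ t : ℝ, (0:ℝ → ℝ) ≤ᵐ[ω.restrict (Set.Ioo p q)] fun τ => ‖F τ‖ :=
    fun t => Filter.Eventually.of_forall fun τ => by simp [Pi.zero_apply]
  have key : ∀ k : ℕ, ∀ t ∈ Set.Ioo p q, ‖Z t‖ ≤ C / 2 ^ k := by
    intro k
    induction k with
    | zero =>
      intro t ht
      refine (hZle t ht).trans ?_
      simp only [pow_zero, div_one, hCdef]
      apply mul_le_mul_of_nonneg_left _ hK
      exact setIntegral_mono_set hFi.norm (hnn t)
        (HasSubset.Subset.eventuallyLE (hSsub t ht))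
    | succ k ih =>
      intro t ht
      have hFiS : IntegrableOn (fun τ => ‖F τ‖) (S t) ω :=
        (hFi.mono_set (hSsub t ht)).norm
      have hgiS : IntegrableOn g (S t) ω := hgi.mono_set (hSsub t ht)
      have h1 : ∫ τ in S t, ‖F τ‖ ∂ω ≤ ∫ τ in S t, g τ * (C / 2 ^ k) ∂ω := by
        apply setIntegral_mono_on hFiS (hgiS.mul_const _) (hSm t)
        intro τ hτ
        exact (hFg τ (hSsub t ht hτ)).trans
          (mul_le_mul_of_nonneg_left (ih τ (hSsub t ht hτ)) (hg0 τ))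
      have h2 : ∫ τ in S t, g τ * (C / 2 ^ k) ∂ω = (∫ τ in S t, g τ ∂ω) * (C / 2 ^ k) :=
        integral_mul_const _ _
      have h3 : ∫ τ in S t, g τ ∂ω ≤ ∫ τ in Set.Ioo p q, g τ ∂ω :=
        setIntegral_mono_set hgi (Filter.Eventually.of_forall fun τ => hg0 τ)
          (HasSubset.Subset.eventuallyLE (hSsub t ht))
      have h4 : ‖Z t‖ ≤ K * ((∫ τ in S t, g τ ∂ω) * (C / 2 ^ k)) := by
        refine (hZle t ht).trans ?_
        apply mul_le_mul_of_nonneg_left _ hK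
        rw [← h2]; exact h1
      have h5 : K * ((∫ τ in S t, g τ ∂ω) * (C / 2 ^ k))
          = (K * ∫ τ in S t, g τ ∂ω) * (C / 2 ^ k) := by ring
      have h6 : K * ∫ τ in S t, g τ ∂ω ≤ 1/2 :=
        le_trans (mul_le_mul_of_nonneg_left h3 hK) hsmall
      have h7 : (0:ℝ) ≤ C / 2 ^ k := div_nonneg hC0 (by positivity)
      have h8 : (K * ∫ τ in S t, g τ ∂ω) * (C / 2 ^ k) ≤ (1/2) * (C / 2 ^ k) :=
        mul_le_mul_of_nonneg_right h6 h7
      have h9 : (1/2 : ℝ) * (C / 2 ^ k) = C / 2 ^ (k+1) := by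
        rw [pow_succ]; ring
      linarith [h4, h8]
  intro t ht
  have hlim : Tendsto (fun k : ℕ => C / 2 ^ k) atTop (𝓝 0) := by
    have h1 : ∀ k : ℕ, C / 2 ^ k = C * (1/2 : ℝ) ^ k := by
      intro k; rw [one_div, inv_pow, ← div_eq_mul_inv]
    simp only [h1]
    have := (tendsto_pow_atTop_nhds_zero_of_lt_one
      (by norm_num : (0:ℝ) ≤ 1/2) (by norm_num : (1/2:ℝ) < 1)).const_mul C
    simpa using this
  have hle : ‖Z t‖ ≤ 0 :=
    ge_of_tendsto hlim (Filter.Eventually.of_forall fun k => key k t ht)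
  exact norm_le_zero_iff.mp hle

/-- Uniqueness for the homogeneous linear measure differential equation
`Y(x) = Y_c + ∫_c^x M(t) Y(t) dω(t)`, provided `I + ω{x}·M(x)` is invertible everywhere. -/
theorem stmt4 {n : ℕ} (a b c : ℝ) (ω : Measure ℝ)
    (M : ℝ → Matrix (Fin n) (Fin n) ℂ) (hc : c ∈ Set.Ioo a b)
    (hM : ∀ α ∈ Set.Ioo a b, ∀ β ∈ Set.Ioo a b, ∀ i j,
      IntegrableOn (fun t => M t i j) (Set.Ico α β) ω)
    (hreg : ∀ x ∈ Set.Ioo a b, IsUnit (1 + (ω {x}).toReal • M x))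
    (Yc : Fin n → ℂ) (Y₁ Y₂ : ℝ → Fin n → ℂ)
    (hi₁ : ∀ α ∈ Set.Ioo a b, ∀ β ∈ Set.Ioo a b,
      IntegrableOn (fun t => (M t).mulVec (Y₁ t)) (Set.Ico α β) ω)
    (hi₂ : ∀ α ∈ Set.Ioo a b, ∀ β ∈ Set.Ioo a b,
      IntegrableOn (fun t => (M t).mulVec (Y₂ t)) (Set.Ico α β) ω)
    (h₁ : ∀ x ∈ Set.Ioo a b, Y₁ x = Yc + vInt ω (fun t => (M t).mulVec (Y₁ t)) c x)
    (h₂ : ∀ x ∈ Set.Ioo a b, Y₂ x = Yc + vInt ω (fun t => (M t).mulVec (Y₂ t)) c x) :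
    ∀ x ∈ Set.Ioo a b, Y₁ x = Y₂ x := by
  classical
  obtain ⟨hac, hcb⟩ := hc
  set Z : ℝ → Fin n → ℂ := fun t => Y₁ t - Y₂ t with hZdef
  set F : ℝ → Fin n → ℂ := fun t => (M t).mulVec (Z t) with hFdef
  set g : ℝ → ℝ := fun t => ∑ i, ∑ j, ‖M t i j‖ with hgdef
  have hg0 : ∀ t, 0 ≤ g t := fun t =>
    Finset.sum_nonneg fun i _ => Finset.sum_nonneg fun j _ => norm_nonneg _
  have hgi : ∀ α ∈ Set.Ioo a b, ∀ β ∈ Set.Ioo a b, IntegrableOn g (Set.Ico α β) ω := by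
    intro α hα β hβ
    apply integrable_finset_sum
    intro i _
    exact integrable_finset_sum _ fun j _ => (hM α hα β hβ i j).norm
  have hFsub : F = fun t => (M t).mulVec (Y₁ t) - (M t).mulVec (Y₂ t) := by
    funext t; simp [hFdef, hZdef, Matrix.mulVec_sub]
  have hFint : ∀ α ∈ Set.Ioo a b, ∀ β ∈ Set.Ioo a b, IntegrableOn F (Set.Ico α β) ω := by
    intro α hα β hβ
    rw [hFsub]
    exact (hi₁ α hα β hβ).sub (hi₂ α hα β hβ)
  have hFg : ∀ t, ‖F t‖ ≤ g t * ‖Z t‖ := fun t => mulVec_norm_le' (M t) (Z t)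
  have hFZ : ∀ t, Z t = 0 → F t = 0 := by
    intro t ht; simp [hFdef, ht, Matrix.mulVec_zero]
  have hZeq : ∀ y ∈ Set.Ioo a b, Z y = vInt ω F c y := by
    intro y hy
    have e1 := h₁ y hy
    have e2 := h₂ y hy
    have key : vInt ω (fun t => (M t).mulVec (Y₁ t)) c y
        - vInt ω (fun t => (M t).mulVec (Y₂ t)) c y = vInt ω F c y := by
      unfold vInt
      by_cases hcy : c ≤ y
      · simp only [if_pos hcy]
        rw [← integral_sub (hi₁ c ⟨hac, hcb⟩ y hy) (hi₂ c ⟨hac, hcb⟩ y hy)]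
        rw [hFsub]
      · simp only [if_neg hcy]
        have habel : ∀ (A B : Fin n → ℂ), -A - -B = -(A - B) := fun A B => by abel
        rw [habel, ← integral_sub (hi₁ y hy c ⟨hac, hcb⟩) (hi₂ y hy c ⟨hac, hcb⟩), hFsub]
    rw [hZdef]
    show Y₁ y - Y₂ y = vInt ω F c y
    rw [e1, e2, add_sub_add_left_eq_sub, key]
  have hZc : Z c = 0 := by
    have h := hZeq c ⟨hac, hcb⟩
    simpa [vInt] using h
  -- forward direction
  have Hfwd : ∀ x₀ ∈ Set.Ioo a b, c ≤ x₀ → Z x₀ = 0 := by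
    intro x₀ hx₀ hcx₀
    by_contra hne
    set S : Set ℝ := {y | y ∈ Set.Icc c x₀ ∧ Z y ≠ 0} with hSdef
    have hx₀S : x₀ ∈ S := ⟨⟨hcx₀, le_refl _⟩, hne⟩
    have hSne : S.Nonempty := ⟨x₀, hx₀S⟩
    have hSbdd : BddBelow S := ⟨c, fun y hy => hy.1.1⟩
    set s := sInf S with hsdef
    have hcs : c ≤ s := le_csInf hSne fun y hy => hy.1.1
    have hsx : s ≤ x₀ := csInf_le hSbdd hx₀S
    have hsab : s ∈ Set.Ioo a b := ⟨lt_of_lt_of_le hac hcs, lt_of_le_of_lt hsx hx₀.2⟩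
    have hzero_lt : ∀ y, c ≤ y → y < s → Z y = 0 := by
      intro y hy1 hy2
      by_contra hz
      exact absurd (csInf_le hSbdd ⟨⟨hy1, le_trans (le_of_lt hy2) hsx⟩, hz⟩)
        (not_le.mpr hy2)
    have hFzero_lt : Set.EqOn F 0 (Set.Ico c s) := by
      intro y hy
      simpa using hFZ y (hzero_lt y hy.1 hy.2)
    have hZs : Z s = 0 := by
      have he := hZeq s hsab
      rw [vInt, if_pos hcs] at he
      rw [he, setIntegral_congr_fun measurableSet_Ico hFzero_lt]
      simp
    have hzero_le : ∀ y, c ≤ y → y ≤ s → Z y = 0 := by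
      intro y h1 h2
      rcases eq_or_lt_of_le h2 with h | h
      · rw [h]; exact hZs
      · exact hzero_lt y h1 h
    have hssx : s < x₀ := lt_of_le_of_ne hsx (fun h => hne (h ▸ hZs))
    obtain ⟨s', hss', hs'x, hsmall⟩ :=
      exists_small_right ω g s x₀ hssx (hgi s hsab x₀ hx₀) hg0
    have hIoosub : Set.Ioo s s' ⊆ Set.Ico s x₀ := fun τ hτ =>
      ⟨le_of_lt hτ.1, lt_of_lt_of_le hτ.2 hs'x⟩
    have hloc : ∀ t ∈ Set.Ioo s s', Z t = ∫ τ in Set.Ioo s t, F τ ∂ω := by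
      intro t ht
      have htab : t ∈ Set.Ioo a b :=
        ⟨lt_trans hsab.1 ht.1, lt_trans (lt_of_lt_of_le ht.2 hs'x) hx₀.2⟩
      have hct : c ≤ t := le_trans hcs (le_of_lt ht.1)
      have he := hZeq t htab
      rw [vInt, if_pos hct] at he
      have hsplit : Set.Ico c t = Set.Ico c s ∪ Set.Ico s t :=
        (Set.Ico_union_Ico_eq_Ico hcs (le_of_lt ht.1)).symm
      have hFi_ct : IntegrableOn F (Set.Ico c t) ω := hFint c ⟨hac, hcb⟩ t htab
      have hFi_cs : IntegrableOn F (Set.Ico c s) ω :=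
        hFi_ct.mono_set (Set.Ico_subset_Ico_right (le_of_lt ht.1))
      have hFi_st : IntegrableOn F (Set.Ico s t) ω :=
        hFi_ct.mono_set (Set.Ico_subset_Ico_left hcs)
      have hdisj : Disjoint (Set.Ico c s) (Set.Ico s t) :=
        Set.disjoint_left.mpr fun x h1 h2 => absurd h1.2 (not_lt.mpr h2.1)
      rw [hsplit, setIntegral_union hdisj measurableSet_Ico hFi_cs hFi_st,
        setIntegral_congr_fun measurableSet_Ico hFzero_lt] at he
      have hins : Set.Ico s t = {s} ∪ Set.Ioo s t := by
        rw [← Set.Ioo_insert_left ht.1, Set.insert_eq]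
      have hdisj2 : Disjoint ({s} : Set ℝ) (Set.Ioo s t) := by
        simp [Set.disjoint_singleton_left]
      have hFi_sing : IntegrableOn F ({s} : Set ℝ) ω :=
        hFi_st.mono_set (by rw [hins]; exact Set.subset_union_left)
      have hFi_ioo : IntegrableOn F (Set.Ioo s t) ω :=
        hFi_st.mono_set (by rw [hins]; exact Set.subset_union_right)
      rw [hins, setIntegral_union hdisj2 measurableSet_Ioo hFi_sing hFi_ioo,
        integral_singleton, hFZ s hZs] at he
      simpa using he
    have hz' : ∀ t ∈ Set.Ioo s s', Z t = 0 := by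
      apply iter_zero ω g F Z s s' 1 (by norm_num)
        ((hgi s hsab x₀ hx₀).mono_set hIoosub) hg0
        ((hFint s hsab x₀ hx₀).mono_set hIoosub)
        (fun t _ => hFg t)
        (fun t => Set.Ioo s t) (fun t => measurableSet_Ioo)
        (fun t ht τ hτ => ⟨hτ.1, lt_trans hτ.2 ht.2⟩)
        ?_ ?_
      · intro t ht
        rw [one_mul, hloc t ht]
        exact norm_integral_le_integral_norm _
      · rw [one_mul]; linarith
    have hfinal : s' ≤ s := by
      apply le_csInf hSne
      intro y hy
      by_contra hlt
      push_neg at hlt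
      rcases le_or_gt y s with h | h
      · exact hy.2 (hzero_le y hy.1.1 h)
      · exact hy.2 (hz' y ⟨h, hlt⟩)
    linarith
  -- backward direction
  have Hbwd : ∀ x₀ ∈ Set.Ioo a b, x₀ ≤ c → Z x₀ = 0 := by
    intro x₀ hx₀ hx₀c
    by_contra hne
    set S : Set ℝ := {y | y ∈ Set.Icc x₀ c ∧ Z y ≠ 0} with hSdef
    have hx₀S : x₀ ∈ S := ⟨⟨le_refl _, hx₀c⟩, hne⟩
    have hSne : S.Nonempty := ⟨x₀, hx₀S⟩
    have hSbdd : BddAbove S := ⟨c, fun y hy => hy.1.2⟩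
    set s := sSup S with hsdef
    have hsc : s ≤ c := csSup_le hSne fun y hy => hy.1.2
    have hxs : x₀ ≤ s := le_csSup hSbdd hx₀S
    have hsab : s ∈ Set.Ioo a b := ⟨lt_of_lt_of_le hx₀.1 hxs, lt_of_le_of_lt hsc hcb⟩
    have hzero_gt : ∀ y, s < y → y ≤ c → Z y = 0 := by
      intro y hy1 hy2
      by_contra hz
      exact absurd (le_csSup hSbdd ⟨⟨le_trans hxs (le_of_lt hy1), hy2⟩, hz⟩)
        (not_le.mpr hy1)
    have hFzero_gt : Set.EqOn F 0 (Set.Ioo s c) := by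
      intro y hy
      simpa using hFZ y (hzero_gt y hy.1 (le_of_lt hy.2))
    have hZs : Z s = 0 := by
      rcases eq_or_lt_of_le hsc with heq | hlt
      · rw [heq]; exact hZc
      · have he := hZeq s hsab
        rw [vInt, if_neg (not_le.mpr hlt)] at he
        have hins : Set.Ico s c = {s} ∪ Set.Ioo s c := by
          rw [← Set.Ioo_insert_left hlt, Set.insert_eq]
        have hdisj2 : Disjoint ({s} : Set ℝ) (Set.Ioo s c) := by
          simp [Set.disjoint_singleton_left]
        have hFi_sc : IntegrableOn F (Set.Ico s c) ω := hFint s hsab c ⟨hac, hcb⟩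
        have hFi_sing : IntegrableOn F ({s} : Set ℝ) ω :=
          hFi_sc.mono_set (by rw [hins]; exact Set.subset_union_left)
        have hFi_ioo : IntegrableOn F (Set.Ioo s c) ω :=
          hFi_sc.mono_set (by rw [hins]; exact Set.subset_union_right)
        rw [hins, setIntegral_union hdisj2 measurableSet_Ioo hFi_sing hFi_ioo,
          integral_singleton, setIntegral_congr_fun measurableSet_Ioo hFzero_gt] at he
        simp only [Pi.zero_apply, integral_zero, add_zero] at he
        -- he : Z s = -((ω {s}).toReal • F s)
        apply eq_zero_of_isUnit_mulVec (hreg s hsab)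
        rw [Matrix.add_mulVec, Matrix.one_mulVec, Matrix.smul_mulVec]
        nth_rewrite 1 [he]
        simp [hFdef, Measure.real]
    have hzero_ge : ∀ y, s ≤ y → y ≤ c → Z y = 0 := by
      intro y h1 h2
      rcases eq_or_lt_of_le h1 with h | h
      · rw [← h]; exact hZs
      · exact hzero_gt y h h2
    have hFzero_ge : Set.EqOn F 0 (Set.Ico s c) := by
      intro y hy
      simpa using hFZ y (hzero_ge y hy.1 (le_of_lt hy.2))
    have hxs' : x₀ < s := lt_of_le_of_ne hxs (fun h => hne (h ▸ hZs))
    obtain ⟨s', hx₀s', hs's, hsmall⟩ :=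
      exists_small_left ω g x₀ s hxs' (hgi x₀ hx₀ s hsab) hg0
    have hIoosub : Set.Ioo s' s ⊆ Set.Ico x₀ s := fun τ hτ =>
      ⟨le_trans hx₀s' (le_of_lt hτ.1), hτ.2⟩
    have hs'ab : s' ∈ Set.Ioo a b :=
      ⟨lt_of_lt_of_le hx₀.1 hx₀s', lt_trans (lt_of_lt_of_le hs's hsc) hcb⟩
    -- local representation on Ico s' s
    have hloc : ∀ t ∈ Set.Ico s' s,
        Z t + (ω {t}).toReal • F t = -∫ τ in Set.Ioo t s, F τ ∂ω := by
      intro t ht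
      have htab : t ∈ Set.Ioo a b :=
        ⟨lt_of_lt_of_le hs'ab.1 ht.1, lt_trans (lt_of_lt_of_le ht.2 hsc) hcb⟩
      have htc : t < c := lt_of_lt_of_le ht.2 hsc
      have he := hZeq t htab
      rw [vInt, if_neg (not_le.mpr htc)] at he
      have hsplit : Set.Ico t c = Set.Ico t s ∪ Set.Ico s c :=
        (Set.Ico_union_Ico_eq_Ico (le_of_lt ht.2) hsc).symm
      have hFi_tc : IntegrableOn F (Set.Ico t c) ω := hFint t htab c ⟨hac, hcb⟩
      have hFi_ts : IntegrableOn F (Set.Ico t s) ω :=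
        hFi_tc.mono_set (Set.Ico_subset_Ico_right hsc)
      have hFi_sc : IntegrableOn F (Set.Ico s c) ω :=
        hFi_tc.mono_set (Set.Ico_subset_Ico_left (le_of_lt ht.2))
      have hdisj : Disjoint (Set.Ico t s) (Set.Ico s c) :=
        Set.disjoint_left.mpr fun x h1 h2 => absurd h1.2 (not_lt.mpr h2.1)
      rw [hsplit, setIntegral_union hdisj measurableSet_Ico hFi_ts hFi_sc,
        setIntegral_congr_fun measurableSet_Ico hFzero_ge] at he
      have hins : Set.Ico t s = {t} ∪ Set.Ioo t s := by
        rw [← Set.Ioo_insert_left ht.2, Set.insert_eq]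
      have hdisj2 : Disjoint ({t} : Set ℝ) (Set.Ioo t s) := by
        simp [Set.disjoint_singleton_left]
      have hFi_sing : IntegrableOn F ({t} : Set ℝ) ω :=
        hFi_ts.mono_set (by rw [hins]; exact Set.subset_union_left)
      have hFi_ioo : IntegrableOn F (Set.Ioo t s) ω :=
        hFi_ts.mono_set (by rw [hins]; exact Set.subset_union_right)
      rw [hins, setIntegral_union hdisj2 measurableSet_Ioo hFi_sing hFi_ioo,
        integral_singleton] at he
      simp only [Pi.zero_apply, integral_zero, add_zero] at he
      rw [he, Measure.real]; abel
    -- atom smallness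
    have hatom : ∀ t ∈ Set.Ioo s' s, (ω {t}).toReal * g t ≤ 1/4 := by
      intro t ht
      have h1 : (ω {t}).toReal * g t = ∫ τ in ({t} : Set ℝ), g τ ∂ω := by
        rw [integral_singleton, smul_eq_mul]; rfl
      have h2 : ∫ τ in ({t} : Set ℝ), g τ ∂ω ≤ ∫ τ in Set.Ioo s' s, g τ ∂ω := by
        apply setIntegral_mono_set ((hgi x₀ hx₀ s hsab).mono_set hIoosub)
          (Filter.Eventually.of_forall fun τ => hg0 τ)
        exact HasSubset.Subset.eventuallyLE (Set.singleton_subset_iff.mpr ht)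
      linarith
    -- norm estimate
    have hest : ∀ t ∈ Set.Ioo s' s, ‖Z t‖ ≤ (4/3) * ∫ τ in Set.Ioo t s, ‖F τ‖ ∂ω := by
      intro t ht
      set w : Fin n → ℂ := (ω {t}).toReal • F t with hwdef
      have hZw : Z t = (Z t + w) - w := by abel
      have h1 : ‖Z t + w‖ ≤ ∫ τ in Set.Ioo t s, ‖F τ‖ ∂ω := by
        rw [hloc t ⟨le_of_lt ht.1, ht.2⟩, norm_neg]
        exact norm_integral_le_integral_norm _
      have h2 : ‖w‖ ≤ (1/4) * ‖Z t‖ := by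
        rw [hwdef, norm_smul, Real.norm_eq_abs, abs_of_nonneg ENNReal.toReal_nonneg]
        calc (ω {t}).toReal * ‖F t‖ ≤ (ω {t}).toReal * (g t * ‖Z t‖) :=
              mul_le_mul_of_nonneg_left (hFg t) ENNReal.toReal_nonneg
          _ = ((ω {t}).toReal * g t) * ‖Z t‖ := by ring
          _ ≤ (1/4) * ‖Z t‖ :=
              mul_le_mul_of_nonneg_right (hatom t ht) (norm_nonneg _)
      have h3 : ‖Z t‖ ≤ ‖Z t + w‖ + ‖w‖ := by
        nth_rewrite 1 [hZw]
        exact norm_sub_le _ _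
      linarith
    have hz' : ∀ t ∈ Set.Ioo s' s, Z t = 0 := by
      apply iter_zero ω g F Z s' s (4/3) (by norm_num)
        ((hgi x₀ hx₀ s hsab).mono_set hIoosub) hg0
        ((hFint x₀ hx₀ s hsab).mono_set hIoosub)
        (fun t _ => hFg t)
        (fun t => Set.Ioo t s) (fun t => measurableSet_Ioo)
        (fun t ht τ hτ => ⟨lt_trans ht.1 hτ.1, hτ.2⟩)
        hest ?_
      have hgnn : (0:ℝ) ≤ ∫ t in Set.Ioo s' s, g t ∂ω :=
        integral_nonneg fun t => hg0 t
      linarith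
    -- now Z s' = 0
    have hZs' : Z s' = 0 := by
      have he := hloc s' ⟨le_refl _, hs's⟩
      have hFz : Set.EqOn F 0 (Set.Ioo s' s) := by
        intro y hy; simpa using hFZ y (hz' y hy)
      rw [setIntegral_congr_fun measurableSet_Ioo hFz] at he
      simp only [Pi.zero_apply, integral_zero, neg_zero] at he
      -- he : Z s' + (ω {s'}).toReal • F s' = 0
      apply eq_zero_of_isUnit_mulVec (hreg s' hs'ab)
      rw [Matrix.add_mulVec, Matrix.one_mulVec, Matrix.smul_mulVec]
      simpa [hFdef] using he
    have hfinal : s ≤ s' := by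
      apply csSup_le hSne
      intro y hy
      by_contra hlt
      push_neg at hlt
      rcases le_or_gt s y with h | h
      · exact hy.2 (hzero_ge y h hy.1.2)
      · rcases eq_or_lt_of_le (le_of_lt hlt) with h2 | h2
        · exact hy.2 (h2 ▸ hZs')
        · exact hy.2 (hz' y ⟨h2, h⟩)
      -- hlt : s' < y
    linarith
  intro x hx
  have hZx : Z x = 0 := by
    rcases le_total c x with h | h
    · exact Hfwd x hx h
    · exact Hbwd x hx h
  have h0 : Y₁ x - Y₂ x = 0 := hZx
  exact sub_eq_zero.mp h0
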